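/- Let φ be a binary uniform morphism with matrix ((a,b),(c,d)), a + b = c + d = k, with infinite fixed point w starting in 0, and let g be the graphic with g_u(n) = c·|pref_n(u)|₁ − b·|pref_n(u)|₀. If g_{φ(0)}(k) ≥ −b (equivalently −b(a−c) ≥ −b, i.e., a − c ≤ 1), then w is weakly abelian periodic. In particular, if a = c + 1 then g_{φⁱ(0)}(kⁱ) = −b for all i ≥ 1, so w is WAP along the line y = −b. -/

import Mathlib

open Filter Topology

/-- Number of 1's (`true`) in the length-`n` prefix of the infinite binary word `w`. -/
def ones (w : ℕ → Bool) (n : ℕ) : ℕ :=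
  ((Finset.range n).filter (fun i => w i = true)).card

/-- Number of 0's (`false`) in the length-`n` prefix of `w`. -/
def zeros (w : ℕ → Bool) (n : ℕ) : ℕ := n - ones w n

/-- The graphic of `w`: `g_w(n) = |pref_n(w)|₁ - |pref_n(w)|₀`. -/
def graphic (w : ℕ → Bool) (n : ℕ) : ℤ := (ones w n : ℤ) - (zeros w n : ℤ)

/-- `w` is weakly abelian periodic with frequency `ρ` of the letter 1 in the blocks:
there is a factorization `w = v₀v₁v₂⋯` (cut points `k 0 < k 1 < ⋯`, with `v₀` the
prefix of length `k 0`) such that each block `vᵢ = w[k i, k (i+1))`, `i ≥ 1`,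
has frequency `ρ` of the letter 1. -/
def WAPwith (w : ℕ → Bool) (ρ : ℚ) : Prop :=
  ∃ k : ℕ → ℕ, StrictMono k ∧
    ∀ i : ℕ, ((ones w (k (i+1)) : ℚ) - (ones w (k i) : ℚ))
      = ρ * ((k (i+1) : ℚ) - (k i : ℚ))

/-- `w` is weakly abelian periodic. -/
def WAP (w : ℕ → Bool) : Prop := ∃ ρ : ℚ, WAPwith w ρ

/-- `w` is bounded weakly abelian periodic: WAP with blocks of uniformly bounded length. -/
def BoundedWAP (w : ℕ → Bool) : Prop :=
  ∃ (ρ : ℚ) (k : ℕ → ℕ) (C : ℕ), StrictMono k ∧ (∀ i, k (i+1) - k i ≤ C) ∧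
    ∀ i : ℕ, ((ones w (k (i+1)) : ℚ) - (ones w (k i) : ℚ))
      = ρ * ((k (i+1) : ℚ) - (k i : ℚ))

/-- `w` has bounded width: its graphic lies between two parallel lines with
rational coefficients. -/
def BoundedWidth (w : ℕ → Bool) : Prop :=
  ∃ a b₁ b₂ : ℚ, ∀ n : ℕ,
    a * n + b₁ ≤ (graphic w n : ℚ) ∧ (graphic w n : ℚ) ≤ a * n + b₂

/-- The graphic of the finite word `u` with vectors `v₀ = (1,-b)`, `v₁ = (1,c)`:
`g_u(n) = c·|pref_n(u)|₁ - b·|pref_n(u)|₀`. -/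
def listG (b c : ℕ) (u : List Bool) (n : ℕ) : ℤ :=
  (c : ℤ) * ((u.take n).count true) - (b : ℤ) * ((u.take n).count false)

/-- The graphic of the infinite word `w` with vectors `v₀ = (1,-b)`, `v₁ = (1,c)`:
`g_w(n) = c·|pref_n(w)|₁ - b·|pref_n(w)|₀`. -/
def gW (b c : ℕ) (w : ℕ → Bool) (n : ℕ) : ℤ :=
  (c : ℤ) * (ones w n) - (b : ℤ) * (zeros w n)

/-- `w` is a fixed point of the `k`-uniform binary morphism `0 ↦ φ0`, `1 ↦ φ1`:
the `n`-th letter of `w` is the `(n mod k)`-th letter of the image of the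
`(n div k)`-th letter of `w`. -/
def IsFixedPoint (φ0 φ1 : List Bool) (k : ℕ) (w : ℕ → Bool) : Prop :=
  ∀ n : ℕ, w n = (if w (n / k) = true then φ1 else φ0).getD (n % k) false

/-- A nonnegative square matrix is primitive if some power of it is positive.
A binary morphism is primitive iff its incidence matrix is. -/
def MatPrimitive (M : Matrix (Fin 2) (Fin 2) ℕ) : Prop :=
  ∃ m : ℕ, ∀ i j : Fin 2, 0 < (M ^ m) i j

/- ---------------- auxiliary lemmas ---------------- -/

lemma ones_eq_sum (w : ℕ → Bool) (n : ℕ) :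
    ones w n = ∑ i ∈ Finset.range n, if w i = true then 1 else 0 :=
  Finset.card_filter _ _

lemma ones_le (w : ℕ → Bool) (n : ℕ) : ones w n ≤ n := by
  have := Finset.card_filter_le (Finset.range n) (fun i => w i = true)
  simpa [ones] using this

lemma zeros_int (w : ℕ → Bool) (n : ℕ) : (zeros w n : ℤ) = (n : ℤ) - ones w n := by
  rw [zeros, Nat.cast_sub (ones_le w n)]

lemma gW_eq (b c : ℕ) (w : ℕ → Bool) (n : ℕ) :
    gW b c w n = ((b : ℤ) + c) * (ones w n) - (b : ℤ) * n := by
  rw [gW, zeros_int]; ring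

lemma ones_zero (w : ℕ → Bool) : ones w 0 = 0 := by simp [ones]

lemma ones_succ (w : ℕ → Bool) (n : ℕ) :
    ones w (n+1) = ones w n + if w n = true then 1 else 0 := by
  rw [ones_eq_sum, ones_eq_sum, Finset.sum_range_succ]

lemma gW_succ (b c : ℕ) (w : ℕ → Bool) (n : ℕ) :
    gW b c w (n+1) = gW b c w n + (if w n = true then (c : ℤ) else -(b : ℤ)) := by
  rw [gW_eq, gW_eq, ones_succ]
  cases hwn : w n <;> simp [hwn] <;> push_cast <;> ring

lemma count_true_sum (l : List Bool) :
    (∑ r ∈ Finset.range l.length, if l.getD r false = true then 1 else 0) = l.count true := by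
  induction l with
  | nil => simp
  | cons x t ih =>
    rw [List.length_cons, Finset.sum_range_succ']
    simp only [List.getD_cons_succ, List.getD_cons_zero]
    rw [ih, List.count_cons]
    cases x <;> simp [Nat.add_comm]

lemma count_sum_bool (l : List Bool) : l.count true + l.count false = l.length := by
  induction l with
  | nil => simp
  | cons x t ih =>
    rw [List.count_cons, List.count_cons, List.length_cons]
    cases x <;> simp <;> omega

/-- If some value `v` is taken by the graphic `gW` infinitely often, then `w` is
weakly abelian periodic with frequency `b/(b+c)`. -/
lemma wap_of_value (w : ℕ → Bool) (b c : ℕ) (hbc : 0 < b + c) (v : ℤ)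
    (hinf : {n | gW b c w n = v}.Infinite) : WAPwith w ((b : ℚ)/((b : ℚ)+c)) := by
  refine ⟨Nat.nth (fun n => gW b c w n = v), Nat.nth_strictMono hinf, ?_⟩
  intro i
  have h1 : gW b c w (Nat.nth (fun n => gW b c w n = v) i) = v :=
    Nat.nth_mem_of_infinite hinf i
  have h2 : gW b c w (Nat.nth (fun n => gW b c w n = v) (i+1)) = v :=
    Nat.nth_mem_of_infinite hinf (i+1)
  set n₁ := Nat.nth (fun n => gW b c w n = v) i with hn₁
  set n₂ := Nat.nth (fun n => gW b c w n = v) (i+1) with hn₂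
  have heq : gW b c w n₁ = gW b c w n₂ := h1.trans h2.symm
  rw [gW_eq, gW_eq] at heq
  have hz : ((b : ℤ) + c) * ((ones w n₂ : ℤ) - ones w n₁) = (b : ℤ) * ((n₂ : ℤ) - n₁) := by
    linear_combination -heq
  have hq : ((b : ℚ) + c) * ((ones w n₂ : ℚ) - ones w n₁) = (b : ℚ) * ((n₂ : ℚ) - n₁) := by
    exact_mod_cast hz
  have hne : ((b : ℚ) + c) ≠ 0 := by
    have : (0 : ℚ) < (b : ℚ) + c := by exact_mod_cast hbc
    exact ne_of_gt this
  field_simp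
  linear_combination hq

/-- Theorem 1 (2): Let `φ` be a binary `k`-uniform morphism with matrix
`((a,b),(c,d))` with infinite fixed point `w` starting in `0`, and graphic
`g_u(n) = c·|pref_n(u)|₁ - b·|pref_n(u)|₀`. If `g_{φ(0)}(k) ≥ -b` then `w` is
weakly abelian periodic; in particular, if `a = c + 1` then
`g_{φⁱ(0)}(kⁱ) = g_w(kⁱ) = -b` for all `i ≥ 1` (so `w` is WAP along `y = -b`). -/
theorem morphism_case2_WAP (φ0 φ1 : List Bool) (k a b c d : ℕ) (w : ℕ → Bool)
    (hk : 2 ≤ k) (hlen0 : φ0.length = k) (hlen1 : φ1.length = k)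
    (ha : φ0.count false = a) (hb : φ0.count true = b)
    (hc : φ1.count false = c) (hd : φ1.count true = d)
    (hfix : IsFixedPoint φ0 φ1 k w) (hw0 : w 0 = false) :
    (listG b c φ0 k ≥ -(b : ℤ) → WAP w) ∧
    (a = c + 1 → ∀ i : ℕ, 1 ≤ i → gW b c w (k ^ i) = -(b : ℤ)) := by
  have hk1 : 1 < k := hk
  have hkpos : 0 < k := by omega
  have hab : a + b = k := by have := count_sum_bool φ0; omega
  have hcd : c + d = k := by have := count_sum_bool φ1; omega
  -- the letter at position k*m + r
  have hstep_fix : ∀ m r : ℕ, r < k →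
      w (k*m + r) = (if w m = true then φ1 else φ0).getD r false := by
    intro m r hr
    have h := hfix (k*m + r)
    have hdiv : (k*m + r)/k = m := by
      rw [Nat.mul_add_div hkpos, Nat.div_eq_of_lt hr, Nat.add_zero]
    have hmod : (k*m + r) % k = r := by
      rw [Nat.mul_add_mod]; exact Nat.mod_eq_of_lt hr
    rw [h, hdiv, hmod]
  -- counting ones block by block
  have block : ∀ m : ℕ, ones w (k*(m+1)) = ones w (k*m) + (if w m = true then d else b) := by
    intro m
    have hsplit : k*(m+1) = k*m + k := by ring
    rw [hsplit, ones_eq_sum, ones_eq_sum,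
      ← Finset.sum_range_add_sum_Ico (fun i => if w i = true then 1 else 0)
        (Nat.le_add_right (k*m) k)]
    congr 1
    rw [Finset.sum_Ico_eq_sum_range]
    simp only [Nat.add_sub_cancel_left]
    have hcongr : ∀ r ∈ Finset.range k,
        (if w (k*m + r) = true then 1 else 0)
          = (if (if w m = true then φ1 else φ0).getD r false = true then (1:ℕ) else 0) := by
      intro r hr
      rw [hstep_fix m r (Finset.mem_range.mp hr)]
    rw [Finset.sum_congr rfl hcongr]
    cases hwm : w m with
    | false =>
      simp only [hwm, Bool.false_eq_true, if_false]
      rw [← hlen0, count_true_sum, hb]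
    | true =>
      simp only [hwm, if_true]
      rw [← hlen1, count_true_sum, hd]
  -- key recurrence for ones at multiples of k
  have key : ∀ m : ℕ, (ones w (k*m) : ℤ) = (b : ℤ)*m + ((d : ℤ) - b) * (ones w m) := by
    intro m
    induction m with
    | zero => simp [ones_zero]
    | succ m ih =>
      rw [block m, ones_succ]
      cases hwm : w m <;> simp only [hwm, Bool.false_eq_true, if_false, if_true] <;>
        push_cast <;> linear_combination ih
  have hones1 : ones w 1 = 0 := by
    have := ones_succ w 0
    simp [hw0, ones_zero] at this
    simpa using this
  have honesk : (ones w k : ℤ) = b := by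
    have h := key 1
    rw [Nat.mul_one, hones1] at h
    simpa using h
  have ha' : (a : ℤ) = (k : ℤ) - b := by omega
  have hd' : (d : ℤ) = (k : ℤ) - c := by omega
  -- the recurrence for the graphic at powers of k
  have hrecF : ∀ i : ℕ, gW b c w (k^(i+1)) = ((a : ℤ) - c) * gW b c w (k^i) := by
    intro i
    have hkk : k^(i+1) = k * k^i := by ring
    rw [hkk, gW_eq, gW_eq, key (k^i), ha', hd']
    push_cast
    ring
  have hF1 : gW b c w (k^1) = (b : ℤ) * ((c : ℤ) - a) := by
    rw [pow_one, gW_eq, honesk, ha']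
    ring
  -- Part 2
  have part2 : a = c + 1 → ∀ i : ℕ, 1 ≤ i → gW b c w (k ^ i) = -(b : ℤ) := by
    intro hac i hi
    induction i with
    | zero => omega
    | succ n ih =>
      by_cases hn : n = 0
      · subst hn
        rw [hF1, hac]; push_cast; ring
      · have h := hrecF n
        rw [ih (by omega)] at h
        rw [h, hac]; push_cast; ring
  refine ⟨?_, part2⟩
  -- Part 1
  intro hge
  have hlistG : listG b c φ0 k = (c : ℤ)*b - (b : ℤ)*a := by
    rw [listG, List.take_of_length_le (le_of_eq hlen0), hb, ha]
  by_cases hb0 : b = 0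
  · -- b = 0 : the word is constant 0
    have hall : ∀ n, w n = false := by
      intro n
      induction n using Nat.strong_induction_on with
      | _ n ihn =>
        rcases Nat.eq_zero_or_pos n with h0 | hpos
        · subst h0; exact hw0
        · have hlt : n / k < n := Nat.div_lt_self hpos hk1
          have h := hfix n
          rw [ihn _ hlt] at h
          simp only [Bool.false_eq_true, if_false] at h
          rw [h]
          have hcnt : φ0.count true = 0 := by rw [hb, hb0]
          have hnotin : true ∉ φ0 := List.count_eq_zero.mp hcnt
          by_cases hlen : n % k < φ0.length
          · rw [List.getD_eq_getElem _ _ hlen]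
            have hmem := List.getElem_mem hlen
            cases hx : φ0[n % k] with
            | false => rfl
            | true => exact absurd (hx ▸ hmem) hnotin
          · exact List.getD_eq_default _ _ (le_of_not_gt hlen)
    have honeszero : ∀ n, ones w n = 0 := by
      intro n
      rw [ones, Finset.filter_false_of_mem, Finset.card_empty]
      intro x _
      simp [hall x]
    refine ⟨0, fun n => n, strictMono_id, ?_⟩
    intro i
    simp [honeszero]
  · -- b > 0
    have hbpos : 0 < b := Nat.pos_of_ne_zero hb0
    have hbc : 0 < b + c := by omega
    have hbZ : (0 : ℤ) < b := by exact_mod_cast hbpos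
    have hle : a ≤ c + 1 := by
      rw [hlistG] at hge
      by_contra hcon
      push_neg at hcon
      have hca : (c : ℤ) + 2 ≤ (a : ℤ) := by exact_mod_cast hcon
      nlinarith [hge, hbZ]
    by_cases hac1 : a = c + 1
    · -- constant graphic along k^i
      have hmem : ∀ i : ℕ, gW b c w (k^(i+1)) = -(b : ℤ) :=
        fun i => part2 hac1 (i+1) (by omega)
      have hinj : Function.Injective (fun i : ℕ => k^(i+1)) := by
        intro i j hij
        by_contra hne
        rcases Nat.lt_or_ge i j with h | h
        · exact absurd hij (Nat.ne_of_lt (Nat.pow_lt_pow_right hk1 (by omega)))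
        · have h' : j < i := by omega
          exact absurd hij.symm (Nat.ne_of_lt (Nat.pow_lt_pow_right hk1 (by omega)))
      have hinfset : {n | gW b c w n = -(b : ℤ)}.Infinite :=
        Set.infinite_of_injective_forall_mem hinj hmem
      exact ⟨_, wap_of_value w b c hbc _ hinfset⟩
    · by_cases hac0 : a = c
      · -- graphic vanishes along k^(i+2)
        have hmem : ∀ i : ℕ, gW b c w (k^(i+2)) = 0 := by
          intro i
          have h := hrecF (i+1)
          rw [hac0] at h
          simpa using h
        have hinj : Function.Injective (fun i : ℕ => k^(i+2)) := by
          intro i j hij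
          by_contra hne
          rcases Nat.lt_or_ge i j with h | h
          · exact absurd hij (Nat.ne_of_lt (Nat.pow_lt_pow_right hk1 (by omega)))
          · have h' : j < i := by omega
            exact absurd hij.symm (Nat.ne_of_lt (Nat.pow_lt_pow_right hk1 (by omega)))
        have hinfset : {n | gW b c w n = 0}.Infinite :=
          Set.infinite_of_injective_forall_mem hinj hmem
        exact ⟨_, wap_of_value w b c hbc _ hinfset⟩
      · -- a < c : the graphic oscillates, crossing argument
        have haltc : a < c := by omega
        have hacZ : (a : ℤ) - c < 0 := by
          have : (a : ℤ) < c := by exact_mod_cast haltc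
          linarith
        have hsign : ∀ j : ℕ, 0 < gW b c w (k^(2*j+1)) ∧ gW b c w (k^(2*j+2)) < 0 := by
          intro j
          induction j with
          | zero =>
            have h1 : 0 < gW b c w (k^1) := by
              rw [hF1]
              have : (0 : ℤ) < (c : ℤ) - a := by linarith
              exact mul_pos hbZ this
            constructor
            · simpa using h1
            · have h2 := hrecF 1
              have : gW b c w (k^2) < 0 := by
                rw [h2]; exact mul_neg_of_neg_of_pos hacZ h1
              simpa using this
          | succ j ihj =>
            have e1 : 2*(j+1)+1 = (2*j+2)+1 := by omega
            have h1 : gW b c w (k^(2*(j+1)+1)) = ((a : ℤ) - c) * gW b c w (k^(2*j+2)) := by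
              rw [e1]; exact hrecF (2*j+2)
            have hpos : 0 < gW b c w (k^(2*(j+1)+1)) := by
              rw [h1]; exact mul_pos_of_neg_of_neg hacZ ihj.2
            constructor
            · exact hpos
            · have h2 : gW b c w (k^(2*(j+1)+2)) = ((a : ℤ) - c) * gW b c w (k^(2*(j+1)+1)) := by
                have := hrecF (2*(j+1)+1)
                convert this using 3
              rw [h2]
              exact mul_neg_of_neg_of_pos hacZ hpos
        -- crossings give values in [0, b)
        have hcross : ∀ N : ℕ, ∃ n, N ≤ n ∧ 0 ≤ gW b c w n ∧ gW b c w n < (b : ℤ) := by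
          intro N
          have hPex : ∃ m, gW b c w (k^(2*N+1) + m + 1) < 0 := by
            refine ⟨k^(2*N+2) - k^(2*N+1) - 1, ?_⟩
            have hlt : k^(2*N+1) < k^(2*N+2) := Nat.pow_lt_pow_right hk1 (by omega)
            have heq : k^(2*N+1) + (k^(2*N+2) - k^(2*N+1) - 1) + 1 = k^(2*N+2) := by omega
            rw [heq]
            exact (hsign N).2
          set m₀ := Nat.find hPex with hm₀
          have hneg : gW b c w (k^(2*N+1) + m₀ + 1) < 0 := Nat.find_spec hPex
          refine ⟨k^(2*N+1) + m₀, ?_, ?_, ?_⟩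
          · have : 2*N+1 < k^(2*N+1) := Nat.lt_pow_self hk1
            omega
          · rcases Nat.eq_zero_or_pos m₀ with h0 | hposm
            · rw [h0, Nat.add_zero]
              exact le_of_lt (hsign N).1
            · have hmin := Nat.find_min hPex (show m₀ - 1 < m₀ by omega)
              have heq : k^(2*N+1) + (m₀ - 1) + 1 = k^(2*N+1) + m₀ := by omega
              rw [heq] at hmin
              exact le_of_not_gt hmin
          · have hwn : w (k^(2*N+1) + m₀) = false := by
              cases hwt : w (k^(2*N+1) + m₀) with
              | false => rfl
              | true =>
                have hstep := gW_succ b c w (k^(2*N+1) + m₀)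
                rw [hwt] at hstep
                simp only [if_true] at hstep
                have hge0 : 0 ≤ gW b c w (k^(2*N+1) + m₀) := by
                  rcases Nat.eq_zero_or_pos m₀ with h0 | hposm
                  · rw [h0, Nat.add_zero]; exact le_of_lt (hsign N).1
                  · have hmin := Nat.find_min hPex (show m₀ - 1 < m₀ by omega)
                    have heq : k^(2*N+1) + (m₀ - 1) + 1 = k^(2*N+1) + m₀ := by omega
                    rw [heq] at hmin
                    exact le_of_not_gt hmin
                have hcge : (0 : ℤ) ≤ c := by positivity
                linarith [hneg, hstep]
            have hstep := gW_succ b c w (k^(2*N+1) + m₀)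
            rw [hwn] at hstep
            simp only [Bool.false_eq_true, if_false] at hstep
            linarith [hneg, hstep]
        -- the set of crossing values is infinite; pigeonhole on [0, b)
        have hTinf : {n | 0 ≤ gW b c w n ∧ gW b c w n < (b : ℤ)}.Infinite := by
          by_contra hfin
          rw [Set.not_infinite] at hfin
          obtain ⟨N, hN⟩ := hfin.bddAbove
          obtain ⟨n, hn, hmem⟩ := hcross (N+1)
          have := hN hmem
          omega
        have hex : ∃ v : ℤ, {n | gW b c w n = v}.Infinite := by
          by_contra hcon
          push_neg at hcon
          have hfinv : ∀ v : ℤ, {n | gW b c w n = v}.Finite :=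
            fun v => hcon v
          have hsub : {n | 0 ≤ gW b c w n ∧ gW b c w n < (b : ℤ)} ⊆
              ⋃ v ∈ Finset.Ico (0 : ℤ) (b : ℤ), {n | gW b c w n = v} := by
            intro n hn
            simp only [Set.mem_iUnion, Set.mem_setOf_eq, Finset.mem_Ico]
            exact ⟨gW b c w n, ⟨hn.1, hn.2⟩, rfl⟩
          exact hTinf (Set.Finite.subset
            ((Finset.Ico (0 : ℤ) (b : ℤ)).finite_toSet.biUnion (fun v _ => hfinv v)) hsub)
        obtain ⟨v, hv⟩ := hex
        exact ⟨_, wap_of_value w b c hbc v hv⟩
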